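/- Let f : ℂ → ℂ be a transcendental entire function and suppose there exists an unbounded sequence (r_n) of positive real numbers such that m(r_n, f) > r_n for all n, where m(r,f) = min{|f(z)| : |z| = r}. Then f is strongly polynomial-like. -/

import Mathlib

open Filter Topology

/-- The set `K(f)` of points whose orbit under iteration of `f` is bounded. -/
def boundedOrbitSet (f : ℂ → ℂ) : Set ℂ :=
  {z : ℂ | Bornology.IsBounded (Set.range fun n : ℕ => f^[n] z)}

/-- `f` is a transcendental entire function: holomorphic on all of `ℂ` and not a polynomial. -/
def TranscendentalEntire (f : ℂ → ℂ) : Prop :=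
  Differentiable ℂ f ∧ ¬∃ p : Polynomial ℂ, ∀ z, f z = p.eval z

/-- `S` surrounds `T`: `T` lies in a bounded connected component of the complement of `S`. -/
def SurroundsSet (S T : Set ℂ) : Prop :=
  ∃ z ∈ Sᶜ, T ⊆ connectedComponentIn Sᶜ z ∧
    Bornology.IsBounded (connectedComponentIn Sᶜ z)

/-- `f` is strongly polynomial-like: there is an exhausting sequence of bounded, simply
connected domains `D n` with `closure (D n) ⊆ D (n+1)` such that `f(∂(D n))` surrounds
`closure (D n)`. -/
def StronglyPolynomialLike (f : ℂ → ℂ) : Prop :=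
  ∃ D : ℕ → Set ℂ,
    (∀ n, IsOpen (D n)) ∧ (∀ n, IsConnected (D n)) ∧
    (∀ n, Bornology.IsBounded (D n)) ∧
    (∀ n, SimplyConnectedSpace (D n)) ∧
    (∀ n, closure (D n) ⊆ D (n + 1)) ∧
    (⋃ n, D n) = Set.univ ∧
    (∀ n, SurroundsSet (f '' frontier (D n)) (closure (D n)))

/-- The minimum modulus `m(r, f)` of `f` on the circle of radius `r` about the origin. -/
noncomputable def minMod (f : ℂ → ℂ) (r : ℝ) : ℝ :=
  sInf ((fun z => ‖f z‖) '' Metric.sphere (0 : ℂ) r)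

/-- If `m(rₙ, f) > rₙ` along an unbounded sequence of positive radii, then `f` is
strongly polynomial-like. -/
lemma my_frontier_meet {s t : Set ℂ} (hs : IsPreconnected s) (h1 : (s ∩ t).Nonempty)
    (h2 : (s \ t).Nonempty) : (s ∩ frontier t).Nonempty := by
  by_contra h
  rw [Set.not_nonempty_iff_eq_empty] at h
  have hsub : s ⊆ interior t ∪ (closure t)ᶜ := by
    intro x hx
    by_cases hx1 : x ∈ closure t
    · left
      by_contra hx2
      have hxf : x ∈ frontier t := ⟨hx1, hx2⟩
      exact absurd (Set.mem_inter hx hxf) (by rw [h]; exact Set.notMem_empty x)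
    · exact Or.inr hx1
  have hdisj : Disjoint (interior t) (closure t)ᶜ := by
    rw [Set.disjoint_left]
    intro x hx hx2
    exact hx2 (subset_closure (interior_subset hx))
  rcases hs.subset_or_subset isOpen_interior isClosed_closure.isOpen_compl hdisj hsub with hA | hB
  · obtain ⟨x, hxs, hxt⟩ := h2
    exact hxt (interior_subset (hA hxs))
  · obtain ⟨x, hxs, hxt⟩ := h1
    exact (hB hxs) (subset_closure hxt)

lemma my_surrounds (f : ℂ → ℂ) (hd : Differentiable ℂ f)
    (hopen : ∀ s : Set ℂ, IsOpen s → IsOpen (f '' s))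
    {ρ : ℝ} (hρ : 0 < ρ) (hf0 : ‖f 0‖ < ρ)
    (hm : ∀ z ∈ Metric.sphere (0:ℂ) ρ, ρ < ‖f z‖) :
    SurroundsSet (f '' Metric.sphere (0:ℂ) ρ) (Metric.closedBall (0:ℂ) ρ) := by
  set K := f '' Metric.sphere (0:ℂ) ρ with hKdef
  have hK : ∀ w ∈ K, ρ < ‖w‖ := by
    rintro w ⟨z, hz, rfl⟩; exact hm z hz
  have hball : Metric.closedBall (0:ℂ) ρ ⊆ Kᶜ := by
    intro v hv hvK
    rw [Metric.mem_closedBall, dist_zero_right] at hv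
    exact absurd (hK v hvK) (by rw [not_lt]; linarith)
  have h0K : (0:ℂ) ∈ Kᶜ := hball (Metric.mem_closedBall_self hρ.le)
  set C := connectedComponentIn Kᶜ (0:ℂ) with hCdef
  have hcc : Metric.closedBall (0:ℂ) ρ ⊆ C :=
    (convex_closedBall _ _).isPreconnected.subset_connectedComponentIn
      (Metric.mem_closedBall_self hρ.le) hball
  set T := f '' Metric.closedBall (0:ℂ) ρ with hTdef
  have hTc : IsCompact T := (isCompact_closedBall _ _).image hd.continuous
  have hfront : frontier T ⊆ K := by
    intro w hw
    have hwT : w ∈ T := hTc.isClosed.closure_eq ▸ hw.1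
    obtain ⟨z, hz, rfl⟩ := hwT
    by_cases hzb : z ∈ Metric.ball (0:ℂ) ρ
    · exfalso
      have hint : f z ∈ interior T :=
        interior_maximal (Set.image_mono Metric.ball_subset_closedBall)
          (hopen _ Metric.isOpen_ball) ⟨z, hzb, rfl⟩
      exact hw.2 hint
    · refine ⟨z, ?_, rfl⟩
      rw [Metric.mem_closedBall] at hz
      rw [Metric.mem_ball] at hzb
      rw [Metric.mem_sphere]
      linarith
  have hf0T : f 0 ∈ C ∩ T :=
    ⟨hcc (by rw [Metric.mem_closedBall, dist_zero_right]; exact hf0.le),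
      ⟨0, Metric.mem_closedBall_self hρ.le, rfl⟩⟩
  have hCT : C ⊆ T := by
    by_contra hns
    obtain ⟨x, hx⟩ := Set.not_subset.mp hns
    obtain ⟨w, hwC, hwF⟩ := my_frontier_meet isPreconnected_connectedComponentIn
      ⟨f 0, hf0T⟩ ⟨x, hx⟩
    exact (connectedComponentIn_subset Kᶜ 0 hwC) (hfront hwF)
  exact ⟨0, h0K, hcc, hTc.isBounded.subset hCT⟩

theorem spl_of_min_modulus_condition (f : ℂ → ℂ) (hf : TranscendentalEntire f)
    (r : ℕ → ℝ) (hpos : ∀ n, 0 < r n) (hub : ∀ R : ℝ, ∃ n, R < r n)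
    (hmin : ∀ n, r n < minMod f (r n)) :
    StronglyPolynomialLike f := by
  obtain ⟨hd, hnp⟩ := hf
  -- f is an open map
  have hopen : ∀ s : Set ℂ, IsOpen s → IsOpen (f '' s) := by
    have han : AnalyticOnNhd ℂ f Set.univ :=
      hd.differentiableOn.analyticOnNhd isOpen_univ
    rcases han.is_constant_or_isOpen isPreconnected_univ with ⟨w, hw⟩ | hop
    · exact absurd ⟨Polynomial.C w, fun z => by
        rw [Polynomial.eval_C]; exact hw z (Set.mem_univ z)⟩ hnp
    · exact fun s hs => hop s (Set.subset_univ s) hs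
  -- choice function for radii
  choose g hg using hub
  -- the sequence of radii
  set ρ : ℕ → ℝ := fun n =>
    Nat.rec (r (g ‖f 0‖)) (fun k ρk => r (g (max ρk k))) n with hρdef
  have hρ0 : ‖f 0‖ < ρ 0 := hg _
  have hmono : ∀ n, ρ n < ρ (n + 1) := fun n => lt_of_le_of_lt (le_max_left _ _) (hg _)
  have hgt : ∀ n : ℕ, (n : ℝ) < ρ (n + 1) := fun n => lt_of_le_of_lt (le_max_right _ _) (hg _)
  have hr : ∀ n, ∃ m, ρ n = r m := by
    intro n; cases n with
    | zero => exact ⟨_, rfl⟩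
    | succ k => exact ⟨_, rfl⟩
  have hρpos : ∀ n, 0 < ρ n := by
    intro n; obtain ⟨m, hm⟩ := hr n; rw [hm]; exact hpos m
  have hρmin : ∀ n, ρ n < minMod f (ρ n) := by
    intro n; obtain ⟨m, hm⟩ := hr n; rw [hm]; exact hmin m
  have hρf0 : ∀ n, ‖f 0‖ < ρ n := by
    intro n; induction n with
    | zero => exact hρ0
    | succ k ih => exact ih.trans (hmono k)
  have hm : ∀ n, ∀ z ∈ Metric.sphere (0 : ℂ) (ρ n), ρ n < ‖f z‖ := by
    intro n z hz
    refine lt_of_lt_of_le (hρmin n) (csInf_le ⟨0, ?_⟩ ⟨z, hz, rfl⟩)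
    rintro y ⟨w, _, rfl⟩
    exact norm_nonneg _
  refine ⟨fun n => Metric.ball (0 : ℂ) (ρ n), fun n => Metric.isOpen_ball,
    fun n => ⟨⟨0, Metric.mem_ball_self (hρpos n)⟩, (convex_ball _ _).isPreconnected⟩,
    fun n => Metric.isBounded_ball, fun n => ?_, fun n => ?_, ?_, fun n => ?_⟩
  · haveI := (convex_ball (0 : ℂ) (ρ n)).contractibleSpace ⟨0, Metric.mem_ball_self (hρpos n)⟩
    infer_instance
  · rw [closure_ball _ (hρpos n).ne']
    exact Metric.closedBall_subset_ball (hmono n)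
  · rw [Set.eq_univ_iff_forall]
    intro z
    refine Set.mem_iUnion.mpr ⟨⌈‖z‖⌉₊ + 1, ?_⟩
    rw [Metric.mem_ball, dist_zero_right]
    exact lt_of_le_of_lt (Nat.le_ceil _) (by exact_mod_cast hgt ⌈‖z‖⌉₊)
  · rw [frontier_ball _ (hρpos n).ne', closure_ball _ (hρpos n).ne']
    exact my_surrounds f hd hopen (hρpos n) (hρf0 n) (hm n)
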